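/- If c < 1 - (1+u)/R₀ (with R₀ > 1 + u), then for all q > 0 one has c/(1+q) < 1 - 1/R₁(q), i.e. the system lies in the Full Compliance region for every isolation-breaking rate q, so no interior optimal isolation duration exists. -/

import Mathlib

/-- If `c < 1 - (1+u)/R₀` (with `R₀ > 1 + u`, `u > 0`, `ε ∈ [0,1]`, `c > 0`),
then for all `q > 0` one has `c/(1+q) < 1 - 1/R₁(q)` where
`R₁(q) = (1 - (u/(1+u))(1+εq)/(1+q))·R₀`: the system lies in the Full
Compliance region for every isolation-breaking rate `q`. -/
theorem stmt_15 (R₀ u ε c : ℝ) (hu : 0 < u) (hε0 : 0 ≤ ε) (hε1 : ε ≤ 1)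
    (hR₀ : 1 + u < R₀) (hc : 0 < c) (hcc : c < 1 - (1 + u) / R₀) :
    ∀ q : ℝ, 0 < q →
      c / (1 + q) < 1 - 1 / ((1 - (u / (1 + u)) * ((1 + ε * q) / (1 + q))) * R₀) := by
  intro q hq
  have hq1 : (0:ℝ) < 1 + q := by linarith
  have hu1 : (0:ℝ) < 1 + u := by linarith
  have hR0 : (0:ℝ) < R₀ := by linarith
  -- (1+εq)/(1+q) ≤ 1
  have hfrac : (1 + ε * q) / (1 + q) ≤ 1 := by
    rw [div_le_one hq1]
    nlinarith
  have hfrac0 : 0 ≤ (1 + ε * q) / (1 + q) := by positivity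
  set A := 1 - (u / (1 + u)) * ((1 + ε * q) / (1 + q)) with hA
  clear_value A
  have hAge : 1 / (1 + u) ≤ A := by
    have h1 : (u / (1 + u)) * ((1 + ε * q) / (1 + q)) ≤ u / (1 + u) := by
      have : (0:ℝ) ≤ u / (1 + u) := by positivity
      nlinarith
    have h2 : u / (1 + u) = 1 - 1 / (1 + u) := by
      field_simp
      ring
    rw [hA]; linarith [h1, h2 ▸ h1]
  have hApos : 0 < A := lt_of_lt_of_le (by positivity) hAge
  have hAR : R₀ / (1 + u) ≤ A * R₀ := by
    have h := mul_le_mul_of_nonneg_right hAge (le_of_lt hR0)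
    rwa [one_div_mul_eq_div] at h
  have hAR1 : 1 < A * R₀ := by
    have : (1:ℝ) < R₀ / (1 + u) := (one_lt_div hu1).mpr hR₀
    linarith
  have hinv : 1 / (A * R₀) ≤ (1 + u) / R₀ := by
    rw [div_le_div_iff₀ (by linarith) hR0]
    have := hAR
    rw [div_le_iff₀ hu1] at this
    nlinarith
  have hcq : c / (1 + q) < c := by
    rw [div_lt_iff₀ hq1]
    nlinarith
  linarith
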